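/- Let Θ ⊆ ℝ^d be convex and f : Θ → ℝ be ξ⁻¹-strongly convex on Θ for some ξ ∈ (0,∞), with target π = Z⁻¹ exp(−f). If the random walk Metropolis-Hastings kernel with Gaussian proposal N(θ, h I_d) is (ρ, M)-geometrically ergodic, then ρ ≥ 1 − (1 + h/ξ)^{−d/2}. -/

import Mathlib

open MeasureTheory

/-- The Metropolis-Hastings acceptance function
`a_MH(θ,θ') = min(π(θ')q(θ',θ)/(π(θ)q(θ,θ')), 1)`, equal to `1` when `π(θ)q(θ,θ') = 0`. -/
noncomputable def mhAcceptFn {α : Type*} (pi : α → ℝ) (q : α → α → ℝ) (θ θ' : α) : ℝ :=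
  if 0 < pi θ * q θ θ' then min ((pi θ' * q θ' θ) / (pi θ * q θ θ')) 1 else 1

/-- The Metropolis-Hastings acceptance probability `A(θ) = ∫ a_MH(θ,θ') q(θ,θ') dλ(θ')`. -/
noncomputable def mhAcceptProb {α : Type*} [MeasurableSpace α] (lam : Measure α)
    (pi : α → ℝ) (q : α → α → ℝ) (θ : α) : ℝ :=
  ∫ θ', mhAcceptFn pi q θ θ' * q θ θ' ∂lam

/-- The Metropolis-Hastings Markov kernel
`P(θ,B) = ∫_B a_MH(θ,θ') q(θ,θ') dλ(θ') + δ_θ(B)(1 − A(θ))`. -/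
noncomputable def mhKernel {α : Type*} [MeasurableSpace α] (lam : Measure α)
    (pi : α → ℝ) (q : α → α → ℝ) (θ : α) : Measure α :=
  lam.withDensity (fun θ' => ENNReal.ofReal (mhAcceptFn pi q θ θ' * q θ θ')) +
    (ENNReal.ofReal (1 - mhAcceptProb lam pi q θ)) • Measure.dirac θ

/-- The `t`-step iterate `P^t(θ,·)` of a Markov kernel, with `P^0(θ,·) = δ_θ`. -/
noncomputable def iterK {Ω : Type*} [MeasurableSpace Ω] (P : Ω → Measure Ω) :
    ℕ → Ω → Measure Ω
  | 0 => fun θ => Measure.dirac θ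
  | (t + 1) => fun θ => (iterK P t θ).bind P

/-- Total variation distance:
`‖μ − ν‖_TV = sup { ∫ f dμ − ∫ f dν : f measurable, 0 ≤ f ≤ 1 }`. -/
noncomputable def tvDist {Ω : Type*} [MeasurableSpace Ω] (μ ν : Measure Ω) : ℝ :=
  ⨆ f : {f : Ω → ℝ // Measurable f ∧ ∀ x, f x ∈ Set.Icc (0:ℝ) 1},
    (∫ x, f.1 x ∂μ - ∫ x, f.1 x ∂ν)

/-- The Gaussian random walk proposal density
`q(θ,θ') = (2πh)^{−d/2} exp(−‖θ'−θ‖₂²/(2h))` of `N(θ, h I_d)`. -/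
noncomputable def rwProposal (h : ℝ) (d : ℕ) (θ θ' : Fin d → ℝ) : ℝ :=
  (2 * Real.pi * h) ^ (-(d : ℝ) / 2) * Real.exp (-(∑ i, (θ' i - θ i) ^ 2) / (2 * h))

/-- The log-concave target density `π = Z⁻¹ exp(−f)` on `Θ` (and `0` off `Θ`), where
`Z = ∫_Θ exp(−f)`. -/
noncomputable def logConcaveTarget {d : ℕ} (Θ : Set (Fin d → ℝ))
    (f : (Fin d → ℝ) → ℝ) : (Fin d → ℝ) → ℝ :=
  Θ.indicator (fun θ => Real.exp (-f θ) / ∫ x in Θ, Real.exp (-f x))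


section helper_lemmas

section generic
variable {α : Type*} [MeasurableSpace α]

lemma mhAcceptFn_nonneg {pfun : α → ℝ} {q : α → α → ℝ} (hpfun : ∀ x, 0 ≤ pfun x)
    (hq : ∀ a b, 0 ≤ q a b) (θ θ' : α) : 0 ≤ mhAcceptFn pfun q θ θ' := by
  unfold mhAcceptFn
  split
  · exact le_min (div_nonneg (mul_nonneg (hpfun _) (hq _ _)) (le_of_lt ‹_›)) zero_le_one
  · exact zero_le_one

lemma mhAcceptFn_le_one {pfun : α → ℝ} {q : α → α → ℝ} (θ θ' : α) :
    mhAcceptFn pfun q θ θ' ≤ 1 := by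
  unfold mhAcceptFn
  split
  · exact min_le_right _ _
  · exact le_rfl

lemma mh_integrand_nonneg {pfun : α → ℝ} {q : α → α → ℝ} (hpfun : ∀ x, 0 ≤ pfun x)
    (hq : ∀ a b, 0 ≤ q a b) (θ θ' : α) : 0 ≤ mhAcceptFn pfun q θ θ' * q θ θ' :=
  mul_nonneg (mhAcceptFn_nonneg hpfun hq θ θ') (hq _ _)

lemma mh_integrand_le {pfun : α → ℝ} {q : α → α → ℝ} (hpfun : ∀ x, 0 ≤ pfun x)
    (hq : ∀ a b, 0 ≤ q a b) (θ θ' : α) : mhAcceptFn pfun q θ θ' * q θ θ' ≤ q θ θ' := by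
  have := mhAcceptFn_le_one (pfun := pfun) (q := q) θ θ'
  nlinarith [hq θ θ', mhAcceptFn_nonneg hpfun hq θ θ']

lemma mh_integrand_integrable {lam : Measure α} {pfun : α → ℝ} {q : α → α → ℝ}
    (hpfun : ∀ x, 0 ≤ pfun x) (hq : ∀ a b, 0 ≤ q a b) (θ : α)
    (hmeas : AEStronglyMeasurable (fun θ' => mhAcceptFn pfun q θ θ' * q θ θ') lam)
    (hqint : Integrable (fun θ' => q θ θ') lam) :
    Integrable (fun θ' => mhAcceptFn pfun q θ θ' * q θ θ') lam := by
  refine hqint.mono' hmeas (Filter.Eventually.of_forall fun θ' => ?_)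
  rw [Real.norm_eq_abs, abs_of_nonneg (mh_integrand_nonneg hpfun hq θ θ')]
  exact mh_integrand_le hpfun hq θ θ'

lemma mhAcceptProb_nonneg {lam : Measure α} {pfun : α → ℝ} {q : α → α → ℝ}
    (hpfun : ∀ x, 0 ≤ pfun x) (hq : ∀ a b, 0 ≤ q a b) (θ : α) :
    0 ≤ mhAcceptProb lam pfun q θ :=
  integral_nonneg fun θ' => mh_integrand_nonneg hpfun hq θ θ'

lemma mhAcceptProb_le_one {lam : Measure α} {pfun : α → ℝ} {q : α → α → ℝ}
    (hpfun : ∀ x, 0 ≤ pfun x) (hq : ∀ a b, 0 ≤ q a b) (θ : α)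
    (hmeas : AEStronglyMeasurable (fun θ' => mhAcceptFn pfun q θ θ' * q θ θ') lam)
    (hqint : Integrable (fun θ' => q θ θ') lam)
    (hqone : ∫ θ', q θ θ' ∂lam = 1) :
    mhAcceptProb lam pfun q θ ≤ 1 := by
  calc mhAcceptProb lam pfun q θ ≤ ∫ θ', q θ θ' ∂lam :=
        integral_mono (mh_integrand_integrable hpfun hq θ hmeas hqint) hqint
          (fun θ' => mh_integrand_le hpfun hq θ θ')
    _ = 1 := hqone

lemma mhKernel_isProbability {lam : Measure α} {pfun : α → ℝ} {q : α → α → ℝ}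
    (hpfun : ∀ x, 0 ≤ pfun x) (hq : ∀ a b, 0 ≤ q a b) (θ : α)
    (hmeas : AEStronglyMeasurable (fun θ' => mhAcceptFn pfun q θ θ' * q θ θ') lam)
    (hqint : Integrable (fun θ' => q θ θ') lam)
    (hqone : ∫ θ', q θ θ' ∂lam = 1) :
    IsProbabilityMeasure (mhKernel lam pfun q θ) := by
  constructor
  have hint := mh_integrand_integrable hpfun hq θ hmeas hqint
  have hA0 := mhAcceptProb_nonneg (lam := lam) hpfun hq θ
  have hA1 := mhAcceptProb_le_one hpfun hq θ hmeas hqint hqone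
  have hwd : lam.withDensity (fun θ' => ENNReal.ofReal (mhAcceptFn pfun q θ θ' * q θ θ'))
      Set.univ = ENNReal.ofReal (mhAcceptProb lam pfun q θ) := by
    rw [withDensity_apply _ MeasurableSet.univ, Measure.restrict_univ,
      ← ofReal_integral_eq_lintegral_ofReal hint
        (Filter.Eventually.of_forall fun θ' => mh_integrand_nonneg hpfun hq θ θ')]
    rfl
  simp only [mhKernel, Measure.add_apply, Measure.smul_apply, Measure.dirac_apply' _
    MeasurableSet.univ, hwd, smul_eq_mul, Set.indicator_univ, Pi.one_apply, mul_one]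
  rw [← ENNReal.ofReal_add hA0 (by linarith), add_sub_cancel, ENNReal.ofReal_one]

lemma iterK_isProbability {P : α → Measure α} (hP : Measurable P)
    (hprob : ∀ θ, IsProbabilityMeasure (P θ)) (t : ℕ) (θ : α) :
    IsProbabilityMeasure (iterK P t θ) := by
  induction t with
  | zero => exact ⟨by simp [iterK]⟩
  | succ t ih =>
    constructor
    rw [iterK, Measure.bind_apply MeasurableSet.univ hP.aemeasurable]
    have : ∀ x, P x Set.univ = 1 := fun x => (hprob x).measure_univ
    simp only [this, lintegral_one, ih.measure_univ]

lemma iterK_singleton_lb [MeasurableSingletonClass α] {P : α → Measure α} (hP : Measurable P)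
    {θ₀ : α} {c : ENNReal} (hc : c ≤ P θ₀ {θ₀}) (hc1 : c ≤ 1) (t : ℕ) :
    c ^ t ≤ iterK P t θ₀ {θ₀} := by
  induction t with
  | zero => simp [iterK]
  | succ t ih =>
    rw [iterK, Measure.bind_apply (measurableSet_singleton θ₀) hP.aemeasurable, pow_succ]
    calc c ^ t * c ≤ iterK P t θ₀ {θ₀} * P θ₀ {θ₀} := mul_le_mul' ih hc
      _ = ∫⁻ x in {θ₀}, P x {θ₀} ∂(iterK P t θ₀) := by
          rw [lintegral_singleton]; exact (mul_comm _ _)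
      _ ≤ ∫⁻ x, P x {θ₀} ∂(iterK P t θ₀) := setLIntegral_le_lintegral _ _

lemma tvDist_ge_singleton [MeasurableSingletonClass α] (μ ν : Measure α)
    [IsProbabilityMeasure μ] (x : α) (hν : ν {x} = 0) :
    (μ {x}).toReal ≤ tvDist μ ν := by
  have hbdd : BddAbove (Set.range fun f : {f : α → ℝ // Measurable f ∧ ∀ y, f y ∈ Set.Icc (0:ℝ) 1}
      => (∫ y, f.1 y ∂μ - ∫ y, f.1 y ∂ν)) := by
    refine ⟨1, ?_⟩
    rintro v ⟨⟨g, hgm, hgc⟩, rfl⟩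
    have hgint : Integrable g μ := by
      refine (integrable_const (1:ℝ)).mono' hgm.aestronglyMeasurable
        (Filter.Eventually.of_forall fun y => ?_)
      rw [Real.norm_eq_abs, abs_of_nonneg (hgc y).1]
      exact (hgc y).2
    have h1 : ∫ y, g y ∂μ ≤ 1 := by
      calc ∫ y, g y ∂μ ≤ ∫ _, (1:ℝ) ∂μ := integral_mono hgint (integrable_const 1)
            (fun y => (hgc y).2)
        _ = 1 := by simp
    have h2 : 0 ≤ ∫ y, g y ∂ν := integral_nonneg fun y => (hgc y).1
    simp only
    linarith
  have hmem : Measurable (Set.indicator {x} (fun _ => (1:ℝ))) :=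
    measurable_const.indicator (measurableSet_singleton x)
  have hicc : ∀ y, Set.indicator {x} (fun _ => (1:ℝ)) y ∈ Set.Icc (0:ℝ) 1 := by
    intro y
    by_cases hy : y ∈ ({x} : Set α) <;>
      simp [Set.indicator_apply, hy]
  have key := le_ciSup hbdd (⟨Set.indicator {x} (fun _ => (1:ℝ)), hmem, hicc⟩ :
    {f : α → ℝ // Measurable f ∧ ∀ y, f y ∈ Set.Icc (0:ℝ) 1})
  have hμ : ∫ y, Set.indicator {x} (fun _ => (1:ℝ)) y ∂μ = (μ {x}).toReal := by
    rw [integral_indicator_const (1:ℝ) (measurableSet_singleton x)]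
    simp
    rfl
  have hν' : ∫ y, Set.indicator {x} (fun _ => (1:ℝ)) y ∂ν = 0 := by
    have : (Set.indicator {x} (fun _ => (1:ℝ))) =ᵐ[ν] 0 := by
      rw [Filter.EventuallyEq, ae_iff]
      refine measure_mono_null (fun y hy => ?_) hν
      simp only [Set.mem_setOf_eq, Pi.zero_apply] at hy
      by_contra hxy
      exact hy (Set.indicator_of_notMem (by simpa using hxy) _)
    rw [integral_congr_ae this]; simp
  
  calc (μ {x}).toReal = ∫ y, Set.indicator {x} (fun _ => (1:ℝ)) y ∂μ -
        ∫ y, Set.indicator {x} (fun _ => (1:ℝ)) y ∂ν := by rw [hμ, hν']; ring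
    _ ≤ _ := key

end generic

section gauss

variable {d : ℕ} {h : ℝ}

lemma rwProposal_pos (hh : 0 < h) (θ θ' : Fin d → ℝ) : 0 < rwProposal h d θ θ' :=
  mul_pos (Real.rpow_pos_of_pos (by positivity) _) (Real.exp_pos _)

lemma rwProposal_symm (θ θ' : Fin d → ℝ) : rwProposal h d θ θ' = rwProposal h d θ' θ := by
  unfold rwProposal
  have e : ∑ i, (θ' i - θ i) ^ 2 = ∑ i, (θ i - θ' i) ^ 2 :=
    Finset.sum_congr rfl fun i _ => by ring
  rw [e]

lemma rwProposal_continuous :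
    Continuous (fun p : (Fin d → ℝ) × (Fin d → ℝ) => rwProposal h d p.1 p.2) := by
  unfold rwProposal
  apply Continuous.mul continuous_const
  apply Real.continuous_exp.comp
  apply Continuous.div_const
  apply Continuous.neg
  exact continuous_finset_sum _ fun i _ => by fun_prop

/-- pointwise rewrite of the exponential factor as a product over coordinates -/
lemma gauss_factor (hh : 0 < h) (c : ℝ) (θ θ' : Fin d → ℝ) :
    Real.exp (-(c * ∑ i, (θ' i - θ i) ^ 2)) * rwProposal h d θ θ' =
      (2 * Real.pi * h) ^ (-(d : ℝ) / 2) *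
        ∏ i, Real.exp (-(c + 1 / (2 * h)) * (θ' i - θ i) ^ 2) := by
  unfold rwProposal
  rw [← Real.exp_sum]
  have key : ∑ i, -(c + 1 / (2 * h)) * (θ' i - θ i) ^ 2 =
      -(c * ∑ i, (θ' i - θ i) ^ 2) + (-(∑ i, (θ' i - θ i) ^ 2)) / (2 * h) := by
    rw [← Finset.mul_sum]
    field_simp
    ring
  rw [key, Real.exp_add]
  ring

lemma gauss_integrable (hh : 0 < h) {c : ℝ} (hc : 0 ≤ c) (θ : Fin d → ℝ) :
    Integrable (fun θ' => Real.exp (-(c * ∑ i, (θ' i - θ i) ^ 2)) * rwProposal h d θ θ') := by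
  have hb : 0 < c + 1 / (2 * h) := by positivity
  have base : ∀ i : Fin d, Integrable (fun x : ℝ =>
      Real.exp (-(c + 1 / (2 * h)) * (x - θ i) ^ 2)) := fun i =>
    (integrable_exp_neg_mul_sq hb).comp_sub_right (θ i)
  have hprod : Integrable (fun θ' : Fin d → ℝ =>
      ∏ i, Real.exp (-(c + 1 / (2 * h)) * (θ' i - θ i) ^ 2)) := by
    exact Integrable.fintype_prod_dep fun i => base i
  have := hprod.const_mul ((2 * Real.pi * h) ^ (-(d : ℝ) / 2))
  refine this.congr (Filter.Eventually.of_forall fun θ' => ?_)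
  exact (gauss_factor hh c θ θ').symm

lemma gauss_integral (hh : 0 < h) {c : ℝ} (hc : 0 ≤ c) (θ : Fin d → ℝ) :
    ∫ θ', Real.exp (-(c * ∑ i, (θ' i - θ i) ^ 2)) * rwProposal h d θ θ' =
      (1 + 2 * h * c) ^ (-(d : ℝ) / 2) := by
  have hb : 0 < c + 1 / (2 * h) := by positivity
  set b := c + 1 / (2 * h) with hbdef
  have h1 : ∫ θ', Real.exp (-(c * ∑ i, (θ' i - θ i) ^ 2)) * rwProposal h d θ θ' =
      (2 * Real.pi * h) ^ (-(d : ℝ) / 2) *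
        ∫ θ' : Fin d → ℝ, ∏ i, Real.exp (-b * (θ' i - θ i) ^ 2) := by
    rw [← integral_const_mul]
    exact integral_congr_ae (Filter.Eventually.of_forall fun θ' => gauss_factor hh c θ θ')
  rw [h1]
  have h2 : ∫ θ' : Fin d → ℝ, ∏ i, Real.exp (-b * (θ' i - θ i) ^ 2) =
      ∏ i : Fin d, ∫ x : ℝ, Real.exp (-b * (x - θ i) ^ 2) := by
    exact MeasureTheory.integral_fintype_prod_eq_prod
      (fun i x => Real.exp (-b * (x - θ i) ^ 2))
  rw [h2]
  have h3 : ∀ i : Fin d, ∫ x : ℝ, Real.exp (-b * (x - θ i) ^ 2) = Real.sqrt (Real.pi / b) := by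
    intro i
    rw [integral_sub_right_eq_self (fun x : ℝ => Real.exp (-b * x ^ 2)) (θ i)]
    exact integral_gaussian b
  simp only [h3, Finset.prod_const, Finset.card_univ, Fintype.card_fin]
  -- now: (2πh)^(-(d:ℝ)/2) * sqrt (π/b) ^ d = (1+2hc)^(-(d:ℝ)/2)
  have hπb : (0:ℝ) < Real.pi / b := div_pos Real.pi_pos hb
  have hsq : Real.sqrt (Real.pi / b) ^ d = (Real.pi / b) ^ ((d : ℝ) / 2) := by
    rw [Real.sqrt_eq_rpow, ← Real.rpow_natCast ((Real.pi / b) ^ ((1:ℝ)/2)) d,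
      ← Real.rpow_mul hπb.le]
    congr 1
    ring
  rw [hsq]
  have h2πh : (0:ℝ) < 2 * Real.pi * h := by positivity
  have key : (1 + 2 * h * c) = (2 * Real.pi * h) * (Real.pi / b)⁻¹ := by
    rw [hbdef]
    field_simp
    ring
  rw [key, Real.mul_rpow h2πh.le (inv_nonneg.mpr hπb.le), Real.inv_rpow hπb.le,
    ← Real.rpow_neg hπb.le]
  ring_nf

lemma rw_integrable (hh : 0 < h) (θ : Fin d → ℝ) :
    Integrable (fun θ' => rwProposal h d θ θ') := by
  have := gauss_integrable (d := d) hh le_rfl θ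
  simpa using this

lemma rw_integral_one (hh : 0 < h) (θ : Fin d → ℝ) :
    ∫ θ', rwProposal h d θ θ' = 1 := by
  have := gauss_integral (d := d) hh le_rfl θ
  simpa using this

end gauss

section target
variable {d : ℕ} {h : ℝ} {Θ : Set (Fin d → ℝ)} {f : (Fin d → ℝ) → ℝ}

lemma target_nonneg (hZ : 0 < ∫ x in Θ, Real.exp (-f x)) (x : Fin d → ℝ) :
    0 ≤ logConcaveTarget Θ f x :=
  Set.indicator_nonneg (fun y _ => div_nonneg (Real.exp_pos _).le hZ.le) x

lemma target_pos (hZ : 0 < ∫ x in Θ, Real.exp (-f x)) {x : Fin d → ℝ} (hx : x ∈ Θ) :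
    0 < logConcaveTarget Θ f x := by
  unfold logConcaveTarget
  rw [Set.indicator_of_mem hx]
  exact div_pos (Real.exp_pos _) hZ

lemma target_meas (hfm : Measurable f) (hΘmeas : MeasurableSet Θ) :
    Measurable (logConcaveTarget Θ f) :=
  Measurable.indicator ((hfm.neg.exp).div_const _) hΘmeas

lemma target_ratio (hZ : 0 < ∫ x in Θ, Real.exp (-f x)) {x y : Fin d → ℝ}
    (hx : x ∈ Θ) (hy : y ∈ Θ) :
    logConcaveTarget Θ f y / logConcaveTarget Θ f x = Real.exp (f x - f y) := by
  unfold logConcaveTarget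
  rw [Set.indicator_of_mem hx, Set.indicator_of_mem hy]
  rw [div_div_div_cancel_right₀]
  · rw [← Real.exp_sub]
    congr 1
    ring
  · exact hZ.ne'

lemma accept_bound (hh : 0 < h) (hZ : 0 < ∫ x in Θ, Real.exp (-f x))
    {θ : Fin d → ℝ} (hθ : θ ∈ Θ) {c E : ℝ} (hc : 0 ≤ c) (hE : 0 ≤ E)
    (hkey : ∀ θ' ∈ Θ, f θ + c * ∑ i, (θ' i - θ i) ^ 2 - E ≤ f θ') :
    mhAcceptProb volume (logConcaveTarget Θ f) (rwProposal h d) θ ≤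
      Real.exp E * (1 + 2 * h * c) ^ (-(d : ℝ) / 2) := by
  set π : (Fin d → ℝ) → ℝ := logConcaveTarget Θ f with hπdef
  have hq := rwProposal_pos (d := d) (h := h) hh
  have hπθ : 0 < π θ := target_pos hZ hθ
  have hpt : ∀ θ', mhAcceptFn π (rwProposal h d) θ θ' * rwProposal h d θ θ' ≤
      Real.exp E * (Real.exp (-(c * ∑ i, (θ' i - θ i) ^ 2)) * rwProposal h d θ θ') := by
    intro θ'
    have hcond : 0 < π θ * rwProposal h d θ θ' := mul_pos hπθ (hq θ θ')
    rw [mhAcceptFn, if_pos hcond]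
    by_cases hθ' : θ' ∈ Θ
    · have hratio : (π θ' * rwProposal h d θ' θ) / (π θ * rwProposal h d θ θ') =
          Real.exp (f θ - f θ') := by
        rw [rwProposal_symm θ' θ, mul_div_mul_right _ _ (hq θ θ').ne']
        exact target_ratio hZ hθ hθ'
      rw [hratio]
      have h1 : min (Real.exp (f θ - f θ')) 1 ≤
          Real.exp (E + -(c * ∑ i, (θ' i - θ i) ^ 2)) := by
        refine le_trans (min_le_left _ _) (Real.exp_le_exp.2 ?_)
        have := hkey θ' hθ'
        linarith
      calc min (Real.exp (f θ - f θ')) 1 * rwProposal h d θ θ'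
          ≤ Real.exp (E + -(c * ∑ i, (θ' i - θ i) ^ 2)) * rwProposal h d θ θ' :=
            mul_le_mul_of_nonneg_right h1 (hq θ θ').le
        _ = Real.exp E * (Real.exp (-(c * ∑ i, (θ' i - θ i) ^ 2)) * rwProposal h d θ θ') := by
            rw [Real.exp_add]; ring
    · have hz : π θ' = 0 := Set.indicator_of_notMem hθ' _
      rw [hz, zero_mul, zero_div, min_eq_left zero_le_one, zero_mul]
      exact mul_nonneg (Real.exp_pos _).le (mul_nonneg (Real.exp_pos _).le (hq θ θ').le)
  have hnonneg : ∀ θ', 0 ≤ mhAcceptFn π (rwProposal h d) θ θ' * rwProposal h d θ θ' :=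
    mh_integrand_nonneg (target_nonneg hZ) (fun a b => (hq a b).le) θ
  have hint : Integrable (fun θ' =>
      Real.exp E * (Real.exp (-(c * ∑ i, (θ' i - θ i) ^ 2)) * rwProposal h d θ θ')) :=
    (gauss_integrable hh hc θ).const_mul _
  calc mhAcceptProb volume π (rwProposal h d) θ
      ≤ ∫ θ', Real.exp E * (Real.exp (-(c * ∑ i, (θ' i - θ i) ^ 2)) * rwProposal h d θ θ') :=
        integral_mono_of_nonneg (Filter.Eventually.of_forall hnonneg) hint
          (Filter.Eventually.of_forall hpt)
    _ = Real.exp E * (1 + 2 * h * c) ^ (-(d : ℝ) / 2) := by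
        rw [integral_const_mul, gauss_integral hh hc θ]

end target

section meas
variable {α : Type*} [MeasurableSpace α]

lemma mh_joint_meas {pfun : α → ℝ} {q : α → α → ℝ} (hπ : Measurable pfun)
    (hq : Measurable fun p : α × α => q p.1 p.2) :
    Measurable fun p : α × α => mhAcceptFn pfun q p.1 p.2 * q p.1 p.2 := by
  have h1 : Measurable fun p : α × α => pfun p.1 * q p.1 p.2 :=
    (hπ.comp measurable_fst).mul hq
  have h2 : Measurable fun p : α × α => pfun p.2 * q p.2 p.1 :=
    (hπ.comp measurable_snd).mul (hq.comp measurable_swap)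
  have haMH : Measurable fun p : α × α => mhAcceptFn pfun q p.1 p.2 := by
    unfold mhAcceptFn
    exact Measurable.ite (measurableSet_lt measurable_const h1)
      ((h2.div h1).min measurable_const) measurable_const
  exact haMH.mul hq

lemma mhAcceptProb_meas (lam : Measure α) [SFinite lam] {pfun : α → ℝ} {q : α → α → ℝ}
    (hπ : Measurable pfun) (hq : Measurable fun p : α × α => q p.1 p.2) :
    Measurable (mhAcceptProb lam pfun q) := by
  have := ((mh_joint_meas hπ hq).stronglyMeasurable).integral_prod_right' (ν := lam)
  exact this.measurable

lemma mhKernel_meas (lam : Measure α) [SFinite lam] {pfun : α → ℝ} {q : α → α → ℝ}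
    (hπ : Measurable pfun) (hq : Measurable fun p : α × α => q p.1 p.2) :
    Measurable (mhKernel lam pfun q) := by
  apply Measure.measurable_of_measurable_coe
  intro s hs
  have e : ∀ θ, mhKernel lam pfun q θ s =
      (∫⁻ θ' in s, ENNReal.ofReal (mhAcceptFn pfun q θ θ' * q θ θ') ∂lam) +
        ENNReal.ofReal (1 - mhAcceptProb lam pfun q θ) * s.indicator 1 θ := by
    intro θ
    rw [mhKernel, Measure.add_apply, withDensity_apply _ hs, Measure.smul_apply,
      Measure.dirac_apply' _ hs, smul_eq_mul]
  simp only [e]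
  apply Measurable.add
  · exact Measurable.lintegral_prod_right'
      (f := fun p : α × α => ENNReal.ofReal (mhAcceptFn pfun q p.1 p.2 * q p.1 p.2))
      ((mh_joint_meas hπ hq).ennreal_ofReal)
  · exact ((measurable_const.sub (mhAcceptProb_meas lam hπ hq)).ennreal_ofReal).mul
      (measurable_one.indicator hs)

end meas

section convexity
variable {d : ℕ} {ξ : ℝ} {Θ : Set (Fin d → ℝ)} {f : (Fin d → ℝ) → ℝ}

lemma sq_sum_convexOn : ConvexOn ℝ Set.univ (fun θ : Fin d → ℝ => ∑ i, θ i ^ 2) := by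
  classical
  have hcomp : ∀ i : Fin d, ConvexOn ℝ Set.univ (fun θ : Fin d → ℝ => θ i ^ 2) := by
    intro i
    have h2 : ConvexOn ℝ Set.univ (fun x : ℝ => x ^ 2) := (even_two).convexOn_pow
    have := h2.comp_linearMap (LinearMap.proj i : ((Fin d) → ℝ) →ₗ[ℝ] ℝ)
    simpa [Function.comp_def] using this
  have : ∀ u : Finset (Fin d), ConvexOn ℝ Set.univ (fun θ : Fin d → ℝ => ∑ i ∈ u, θ i ^ 2) := by
    intro u
    induction u using Finset.induction with
    | empty => simpa using convexOn_const (0:ℝ) convex_univ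
    | insert x u hx ih =>
      simp_rw [Finset.sum_insert hx]
      exact (hcomp _).add ih
  exact this Finset.univ

lemma f_convexOn (hξ : 0 < ξ) (hΘconv : Convex ℝ Θ)
    (hsc : ConvexOn ℝ Θ (fun θ => f θ - (∑ i, θ i ^ 2) / (2 * ξ))) : ConvexOn ℝ Θ f := by
  have hN : ConvexOn ℝ Θ (fun θ : Fin d → ℝ => (2 * ξ)⁻¹ • (∑ i, θ i ^ 2)) :=
    ((sq_sum_convexOn.smul (by positivity)).subset (Set.subset_univ _) hΘconv)
  have := hsc.add hN
  have he : ((fun θ => f θ - (∑ i, θ i ^ 2) / (2 * ξ)) + fun θ => (2 * ξ)⁻¹ • (∑ i, θ i ^ 2)) = f := by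
    funext θ
    have hξ' : (2*ξ) ≠ 0 := by positivity
    simp only [Pi.add_apply, smul_eq_mul]
    field_simp
    ring
  rwa [he] at this

lemma f_bddBelow (hd : 0 < d) (hΘconv : Convex ℝ Θ)
    (hconv : ConvexOn ℝ Θ f)
    (hfint : IntegrableOn (fun θ => Real.exp (-f θ)) Θ volume)
    (hZ : 0 < ∫ x in Θ, Real.exp (-f x)) : BddBelow (f '' Θ) := by
  classical
  obtain ⟨I, hI⟩ : ∃ I, I = ∫ x in Θ, Real.exp (-f x) := ⟨_, rfl⟩
  rw [← hI] at hZ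
  have hΘpos : volume Θ ≠ 0 := by
    intro h0
    rw [hI, Measure.restrict_eq_zero.mpr h0, integral_zero_measure] at hZ
    exact lt_irrefl _ hZ
  have hint_ne : (interior Θ).Nonempty := by
    rw [Set.nonempty_iff_ne_empty]
    intro hemp
    have hfr : volume (frontier Θ) = 0 := hΘconv.addHaar_frontier volume
    have hclosure : Θ ⊆ frontier Θ := by
      intro x hx
      rw [frontier, hemp, Set.diff_empty]
      exact subset_closure hx
    exact hΘpos (measure_mono_null hclosure hfr)
  obtain ⟨z, hz⟩ := hint_ne
  obtain ⟨ε, hε, hball⟩ := Metric.isOpen_iff.1 isOpen_interior z hz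
  obtain ⟨r, hr, hrε⟩ : ∃ r, 0 < r ∧ r < ε := ⟨ε/2, by positivity, by linarith⟩
  have hcb : Metric.closedBall z r ⊆ Θ :=
    (Metric.closedBall_subset_ball hrε).trans (hball.trans interior_subset)
  have hcont : ContinuousOn f (Metric.closedBall z r) := by
    have h1 : ConvexOn ℝ (interior Θ) f :=
      hconv.subset interior_subset hΘconv.interior
    exact (h1.continuousOn isOpen_interior).mono
      ((Metric.closedBall_subset_ball hrε).trans hball)
  obtain ⟨w, hw, hwmax'⟩ := (isCompact_closedBall z r).exists_isMaxOn
    ⟨z, Metric.mem_closedBall_self hr.le⟩ hcont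
  rw [isMaxOn_iff] at hwmax'
  obtain ⟨C, hwmax⟩ : ∃ C, ∀ x ∈ Metric.closedBall z r, f x ≤ C := ⟨f w, hwmax'⟩
  by_contra hnb
  obtain ⟨κ, hκdef⟩ : ∃ κ, κ = (volume (Metric.closedBall (0 : Fin d → ℝ) (r/2))).toReal :=
    ⟨_, rfl⟩
  have hκpos : 0 < κ := by
    rw [hκdef]
    exact ENNReal.toReal_pos
      (Metric.measure_closedBall_pos volume _ (by positivity : (0:ℝ) < r/2)).ne'
      measure_closedBall_lt_top.ne
  have hIκ : 0 < I / κ := div_pos hZ hκpos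
  obtain ⟨K, hKdef⟩ : ∃ K, K = -C - 2 * Real.log (I / κ) - 2 := ⟨_, rfl⟩
  obtain ⟨x₀, hx₀Θ, hx₀⟩ : ∃ x ∈ Θ, f x < K := by
    rcases not_bddBelow_iff.1 hnb K with ⟨y, hy, hyK⟩
    rcases hy with ⟨x, hxΘ, rfl⟩
    exact ⟨x, hxΘ, hyK⟩
  obtain ⟨m, hm⟩ : ∃ m : Fin d → ℝ, m = (2:ℝ)⁻¹ • (z + x₀) := ⟨_, rfl⟩
  have hS : ∀ y ∈ Metric.closedBall m (r/2), y ∈ Θ ∧ f y ≤ (C + K)/2 := by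
    intro y hy
    have hwz : ((2:ℝ) • y - x₀) - z = (2:ℝ) • (y - m) := by rw [hm]; module
    have hw'cb : (2:ℝ) • y - x₀ ∈ Metric.closedBall z r := by
      rw [Metric.mem_closedBall, dist_eq_norm, hwz, norm_smul]
      rw [Metric.mem_closedBall, dist_eq_norm] at hy
      have h2 : ‖(2:ℝ)‖ = 2 := by norm_num
      rw [h2]; linarith
    have hw'Θ : (2:ℝ) • y - x₀ ∈ Θ := hcb hw'cb
    have hycomb : (2:ℝ)⁻¹ • ((2:ℝ) • y - x₀) + (2:ℝ)⁻¹ • x₀ = y := by module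
    constructor
    · rw [← hycomb]
      exact hΘconv hw'Θ hx₀Θ (by norm_num) (by norm_num) (by norm_num)
    · have h8 := hconv.2 hw'Θ hx₀Θ (by norm_num : (0:ℝ) ≤ 2⁻¹) (by norm_num : (0:ℝ) ≤ 2⁻¹)
        (by norm_num : (2:ℝ)⁻¹ + 2⁻¹ = 1)
      rw [hycomb] at h8
      have h9 : f y ≤ 2⁻¹ * f ((2:ℝ) • y - x₀) + 2⁻¹ * f x₀ := by
        simpa [smul_eq_mul] using h8
      have hfw' : f ((2:ℝ) • y - x₀) ≤ C := hwmax _ hw'cb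
      linarith [h9, hfw', hx₀]
  have hsub : Metric.closedBall m (r/2) ⊆ Θ := fun y hy => (hS y hy).1
  have hvol : volume (Metric.closedBall m (r/2)) =
      volume (Metric.closedBall (0 : Fin d → ℝ) (r/2)) :=
    Measure.addHaar_closedBall_center _ _ _
  have hmono1 : ∫ x in Metric.closedBall m (r/2), Real.exp (-f x) ≤ I := by
    rw [hI]
    refine setIntegral_mono_set hfint ?_ (HasSubset.Subset.eventuallyLE hsub)
    exact Filter.Eventually.of_forall fun x => (Real.exp_pos _).le
  have hmono2 : Real.exp (-(C + K)/2) * κ ≤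
      ∫ x in Metric.closedBall m (r/2), Real.exp (-f x) := by
    have hle : ∀ x ∈ Metric.closedBall m (r/2),
        Real.exp (-(C + K)/2) ≤ Real.exp (-f x) := by
      intro x hx
      apply Real.exp_le_exp.2
      have := (hS x hx).2
      linarith
    have hconst : ∫ _x in Metric.closedBall m (r/2), Real.exp (-(C + K)/2) =
        Real.exp (-(C + K)/2) * κ := by
      rw [setIntegral_const, smul_eq_mul, hκdef, measureReal_def, hvol, mul_comm]
    rw [← hconst]
    refine setIntegral_mono_on ?_ (hfint.mono_set hsub) measurableSet_closedBall hle
    exact integrableOn_const measure_closedBall_lt_top.ne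
  have hval : Real.exp (-(C + K)/2) = (I / κ) * Real.exp 1 := by
    rw [hKdef]
    rw [show -(C + (-C - 2 * Real.log (I / κ) - 2))/2 = Real.log (I/κ) + 1 by ring]
    rw [Real.exp_add, Real.exp_log hIκ]
  have he1 : (1:ℝ) < Real.exp 1 := by
    have := Real.add_one_le_exp 1
    linarith
  have hcontr : I * Real.exp 1 ≤ I := by
    have h2 : (I / κ) * Real.exp 1 * κ = I * Real.exp 1 := by
      field_simp
    nlinarith [hmono1, hmono2, hval]
  nlinarith

lemma key_ineq (hξ : 0 < ξ) (hΘconv : Convex ℝ Θ) (hΘne : Θ.Nonempty)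
    (hsc : ConvexOn ℝ Θ (fun θ => f θ - (∑ i, θ i ^ 2) / (2 * ξ)))
    (hbdd : BddBelow (f '' Θ)) {s : ℝ} (hs : s ∈ Set.Ioo (0:ℝ) 1) :
    ∃ θ ∈ Θ, ∀ θ' ∈ Θ,
      f θ + ((1 - s)/(2*ξ)) * ∑ i, (θ' i - θ i) ^ 2 - s ≤ f θ' := by
  obtain ⟨hs0, hs1⟩ := hs
  obtain ⟨a, ⟨θs, hθsΘ, rfl⟩, hlt⟩ := Real.lt_sInf_add_pos (hΘne.image f)
    (show (0:ℝ) < s * s by positivity)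
  refine ⟨θs, hθsΘ, fun θ' hθ' => ?_⟩
  have hzΘ : (1 - s) • θs + s • θ' ∈ Θ := hΘconv hθsΘ hθ' (by linarith) hs0.le (by ring)
  have hmz : sInf (f '' Θ) ≤ f ((1 - s) • θs + s • θ') :=
    csInf_le hbdd (Set.mem_image_of_mem f hzΘ)
  have hcvx := hsc.2 hθsΘ hθ' (by linarith : (0:ℝ) ≤ 1 - s) hs0.le (by ring : (1-s) + s = 1)
  simp only [smul_eq_mul] at hcvx
  obtain ⟨k, hk⟩ : ∃ k : ℝ, k = (2 * ξ)⁻¹ := ⟨_, rfl⟩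
  have hkpos : 0 < k := by rw [hk]; positivity
  have hQnn : (0:ℝ) ≤ ∑ i, (θ' i - θs i) ^ 2 := Finset.sum_nonneg fun i _ => sq_nonneg _
  have hquad : (1-s) * (∑ i, θs i ^ 2) + s * (∑ i, θ' i ^ 2)
      - (∑ i, ((1 - s) • θs + s • θ') i ^ 2)
      = s * (1-s) * ∑ i, (θ' i - θs i) ^ 2 := by
    rw [Finset.mul_sum, Finset.mul_sum, Finset.mul_sum, ← Finset.sum_add_distrib,
      ← Finset.sum_sub_distrib]
    refine Finset.sum_congr rfl fun i _ => ?_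
    have hzi : ((1 - s) • θs + s • θ') i = (1 - s) * θs i + s * θ' i := by
      simp [smul_eq_mul]
    rw [hzi]; ring
  have hdiv : ∀ x : Fin d → ℝ, (∑ i, x i ^ 2) / (2 * ξ) = k * (∑ i, x i ^ 2) := by
    intro x; rw [hk]; field_simp
  rw [hdiv, hdiv, hdiv] at hcvx
  have hQk : k * ((1-s) * (∑ i, θs i ^ 2) + s * (∑ i, θ' i ^ 2)
      - (∑ i, ((1 - s) • θs + s • θ') i ^ 2))
      = k * (s * (1-s) * ∑ i, (θ' i - θs i) ^ 2) := by rw [hquad]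
  have hgoal2 : ((1 - s)/(2*ξ)) * ∑ i, (θ' i - θs i) ^ 2
      = (1 - s) * k * ∑ i, (θ' i - θs i) ^ 2 := by
    rw [hk]; field_simp
  rw [hgoal2]
  have hstep : s * (f θs + (1-s) * k * (∑ i, (θ' i - θs i) ^ 2) - s) < s * f θ' := by
    nlinarith [hcvx, hQk, hmz, hlt]
  nlinarith [hstep]
end convexity

end helper_lemmas

/-- Corollary 3: for RWMH with a `ξ⁻¹`-strongly convex potential on convex `Θ`, if the
RWMH kernel is `(ρ, M)`-geometrically ergodic, then `ρ ≥ 1 − (1 + h/ξ)^{−d/2}`. -/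
theorem rwmh_strongly_convex_geometric_rate_lower_bound
    {d : ℕ} (hd : 0 < d) (h ξ : ℝ) (hh : 0 < h) (hξ : 0 < ξ)
    (Θ : Set (Fin d → ℝ)) (hΘne : Θ.Nonempty) (hΘconv : Convex ℝ Θ)
    (hΘmeas : MeasurableSet Θ)
    (f : (Fin d → ℝ) → ℝ) (hfm : Measurable f)
    (hsc : ConvexOn ℝ Θ (fun θ => f θ - (∑ i, θ i ^ 2) / (2 * ξ)))
    (hfint : IntegrableOn (fun θ => Real.exp (-f θ)) Θ volume)
    (hZ : 0 < ∫ x in Θ, Real.exp (-f x))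
    (ρ : ℝ) (hρ : ρ ∈ Set.Ioo (0:ℝ) 1)
    (Mf : (Fin d → ℝ) → ℝ) (hM : ∀ θ ∈ Θ, 0 < Mf θ)
    (hge : ∀ θ ∈ Θ, ∀ t : ℕ, 1 ≤ t →
      tvDist
          (iterK (mhKernel volume (logConcaveTarget Θ f) (rwProposal h d)) t θ)
          (volume.withDensity (fun x => ENNReal.ofReal (logConcaveTarget Θ f x))) ≤
        Mf θ * ρ ^ t) :
    1 - (1 + h / ξ) ^ (-(d : ℝ) / 2) ≤ ρ := by
  obtain ⟨hρ0, hρ1⟩ := hρ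
  have hπm : Measurable (logConcaveTarget Θ f) := target_meas hfm hΘmeas
  have hπ0 : ∀ x, 0 ≤ logConcaveTarget Θ f x := target_nonneg hZ
  have hqm : Measurable fun p : (Fin d → ℝ) × (Fin d → ℝ) => rwProposal h d p.1 p.2 :=
    rwProposal_continuous.measurable
  have hq0 : ∀ a b : Fin d → ℝ, 0 ≤ rwProposal h d a b := fun a b => (rwProposal_pos hh a b).le
  have hPmeas : Measurable (mhKernel volume (logConcaveTarget Θ f) (rwProposal h d)) :=
    mhKernel_meas volume hπm hqm
  have haemeas : ∀ θ : Fin d → ℝ, AEStronglyMeasurable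
      (fun θ' => mhAcceptFn (logConcaveTarget Θ f) (rwProposal h d) θ θ' * rwProposal h d θ θ')
      volume := fun θ =>
    (((mh_joint_meas hπm hqm).comp (measurable_prodMk_left (x := θ)))).aestronglyMeasurable
  have hPprob : ∀ θ, IsProbabilityMeasure
      (mhKernel volume (logConcaveTarget Θ f) (rwProposal h d) θ) := fun θ =>
    mhKernel_isProbability hπ0 hq0 θ (haemeas θ) (rw_integrable hh θ) (rw_integral_one hh θ)
  -- the target measure has no atoms at points
  have hPi0 : ∀ x : Fin d → ℝ,
      (volume.withDensity (fun x => ENNReal.ofReal (logConcaveTarget Θ f x))) {x} = 0 := by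
    intro x
    apply withDensity_absolutelyContinuous volume _
    have hsing : ({x} : Set (Fin d → ℝ)) = Set.pi Set.univ (fun i => {x i}) := by
      ext y
      simp [funext_iff, Set.mem_pi]
    rw [hsing, volume_pi_pi]
    exact Finset.prod_eq_zero (Finset.mem_univ ⟨0, hd⟩) (by simp)
  -- Step 1 : ρ ≥ 1 - A(θ) for every θ ∈ Θ
  have main1 : ∀ θ ∈ Θ,
      1 - mhAcceptProb volume (logConcaveTarget Θ f) (rwProposal h d) θ ≤ ρ := by
    intro θ hθ
    by_contra hlt
    push_neg at hlt
    have hA0 : 0 ≤ mhAcceptProb volume (logConcaveTarget Θ f) (rwProposal h d) θ :=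
      mhAcceptProb_nonneg hπ0 hq0 θ
    have hA1 : mhAcceptProb volume (logConcaveTarget Θ f) (rwProposal h d) θ ≤ 1 :=
      mhAcceptProb_le_one hπ0 hq0 θ (haemeas θ) (rw_integrable hh θ) (rw_integral_one hh θ)
    obtain ⟨σ, hσdef⟩ : ∃ σ : ℝ,
        σ = 1 - mhAcceptProb volume (logConcaveTarget Θ f) (rwProposal h d) θ := ⟨_, rfl⟩
    rw [← hσdef] at hlt
    have hσpos : 0 < σ := lt_trans hρ0 hlt
    have hσ1 : σ ≤ 1 := by rw [hσdef]; linarith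
    have hMθ := hM θ hθ
    obtain ⟨n, hn⟩ := exists_pow_lt_of_lt_one (show 0 < 1 / Mf θ by positivity)
      ((div_lt_one hσpos).2 hlt)
    have hratio : (ρ/σ)^(n+1) < 1 / Mf θ := by
      calc (ρ/σ)^(n+1) = (ρ/σ)^n * (ρ/σ) := pow_succ _ _
        _ ≤ (ρ/σ)^n * 1 := by
            exact mul_le_mul_of_nonneg_left ((div_le_one hσpos).2 hlt.le)
              (pow_nonneg (div_nonneg hρ0.le hσpos.le) n)
        _ = (ρ/σ)^n := mul_one _
        _ < 1 / Mf θ := hn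
    have hMρ : Mf θ * ρ^(n+1) < σ^(n+1) := by
      rw [div_pow, div_lt_div_iff₀ (pow_pos hσpos (n+1)) hMθ] at hratio
      calc Mf θ * ρ^(n+1) = ρ^(n+1) * Mf θ := mul_comm _ _
        _ < σ^(n+1) := by linarith [hratio]
    -- kernel lower bound at the singleton
    have hkernel_lb : ENNReal.ofReal σ ≤
        mhKernel volume (logConcaveTarget Θ f) (rwProposal h d) θ {θ} := by
      rw [mhKernel, Measure.add_apply, Measure.smul_apply, smul_eq_mul,
        Measure.dirac_apply_of_mem (Set.mem_singleton θ), mul_one, hσdef]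
      exact le_add_self
    have hiter := iterK_singleton_lb hPmeas hkernel_lb
      (by rw [hσdef]; exact ENNReal.ofReal_le_one.2 (by linarith)) (n+1)
    haveI := iterK_isProbability hPmeas hPprob (n+1) θ
    have htv := tvDist_ge_singleton
      (iterK (mhKernel volume (logConcaveTarget Θ f) (rwProposal h d)) (n+1) θ)
      (volume.withDensity (fun x => ENNReal.ofReal (logConcaveTarget Θ f x))) θ (hPi0 θ)
    have hσt : σ^(n+1) ≤
        ((iterK (mhKernel volume (logConcaveTarget Θ f) (rwProposal h d)) (n+1) θ) {θ}).toReal := by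
      have h1 : (ENNReal.ofReal σ)^(n+1) = ENNReal.ofReal (σ^(n+1)) :=
        (ENNReal.ofReal_pow hσpos.le (n+1)).symm
      have hfin : (iterK (mhKernel volume (logConcaveTarget Θ f) (rwProposal h d)) (n+1) θ) {θ}
          ≠ ⊤ := (measure_lt_top _ _).ne
      calc σ^(n+1) = (ENNReal.ofReal (σ^(n+1))).toReal :=
            (ENNReal.toReal_ofReal (by positivity)).symm
        _ ≤ _ := ENNReal.toReal_mono hfin (h1 ▸ hiter)
    have hge' := hge θ hθ (n+1) (Nat.le_add_left 1 n)
    linarith [htv, hσt, hMρ, hge']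
  -- Step 2 : for every s ∈ (0,1)
  have main2 : ∀ s ∈ Set.Ioo (0:ℝ) 1,
      1 - Real.exp s * (1 + h * (1 - s) / ξ) ^ (-(d:ℝ)/2) ≤ ρ := by
    intro s hs
    have hbdd := f_bddBelow hd hΘconv (f_convexOn hξ hΘconv hsc) hfint hZ
    obtain ⟨θs, hθsΘ, hkey⟩ := key_ineq hξ hΘconv hΘne hsc hbdd hs
    have hc : (0:ℝ) ≤ (1 - s)/(2*ξ) := by
      have h2 := hs.2
      apply div_nonneg (by linarith) (by positivity)
    have hA := accept_bound hh hZ hθsΘ hc hs.1.le hkey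
    have he : 1 + 2 * h * ((1 - s)/(2*ξ)) = 1 + h * (1 - s) / ξ := by
      field_simp
    rw [he] at hA
    have := main1 θs hθsΘ
    linarith
  -- Step 3 : take the limit s → 0⁺
  have hcont : ContinuousAt (fun s : ℝ => 1 - Real.exp s * (1 + h * (1 - s) / ξ) ^ (-(d:ℝ)/2))
      0 := by
    have hbase : ContinuousAt (fun s : ℝ => 1 + h * (1 - s) / ξ) 0 := by fun_prop
    have hb0 : 1 + h * (1 - (0:ℝ)) / ξ ≠ 0 := by positivity
    exact continuousAt_const.sub
      ((Real.continuous_exp.continuousAt).mul (hbase.rpow_const (Or.inl hb0)))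
  have hval : 1 - Real.exp 0 * (1 + h * (1 - 0) / ξ) ^ (-(d:ℝ)/2) =
      1 - (1 + h / ξ) ^ (-(d:ℝ)/2) := by
    norm_num
  have hlim := hcont.tendsto.mono_left (nhdsWithin_le_nhds (s := Set.Ioi (0:ℝ)))
  rw [hval] at hlim
  refine le_of_tendsto hlim ?_
  filter_upwards [Ioo_mem_nhdsGT_of_mem (Set.mem_Ico.2 ⟨le_refl (0:ℝ), zero_lt_one⟩)] with s hs
  exact main2 s hs
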